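/- Let H be a bipartite graph with parts V₁ and V₂ and m edges, such that some vertex u ∈ V₁ is adjacent to every vertex of V₂. Then for every graph G, t_H(G) ≥ t_{K₂}(G)^m. In other words, Sidorenko's conjecture holds for every bipartite graph having a vertex complete to the other part. -/

import Mathlib

open Finset
open scoped Classical

/-- The number of graph homomorphisms from `H` to `G`. -/
noncomputable def homCount {A B : Type*} [Fintype A] [Fintype B]
    (H : SimpleGraph A) (G : SimpleGraph B) : ℕ :=
  (Finset.univ.filter (fun f : A → B => ∀ a b, H.Adj a b → G.Adj (f a) (f b))).card

set_option linter.unusedSectionVars false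
set_option maxHeartbeats 1000000

noncomputable section SidAux


variable {A B : Type*} [Fintype A] [Fintype B]

/-- termwise Gibbs inequality -/
lemma sid_gibbs {ι : Type*} (s : Finset ι) (P R : ι → ℝ)
    (hP : ∀ i ∈ s, 0 ≤ P i) (hR : ∀ i ∈ s, 0 ≤ R i)
    (hPR : ∀ i ∈ s, P i ≠ 0 → R i ≠ 0) :
    ∑ i ∈ s, P i * Real.log (R i / P i) ≤ ∑ i ∈ s, R i - ∑ i ∈ s, P i := by
  rw [← Finset.sum_sub_distrib]
  apply Finset.sum_le_sum
  intro i hi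
  rcases eq_or_ne (P i) 0 with h | h
  · simp [h, hR i hi]
  · have hPpos : 0 < P i := (hP i hi).lt_of_ne (Ne.symm h)
    have hRpos : 0 < R i := (hR i hi).lt_of_ne (Ne.symm (hPR i hi h))
    have hlog := Real.log_le_sub_one_of_pos (div_pos hRpos hPpos)
    have h2 : P i * Real.log (R i / P i) ≤ P i * (R i / P i - 1) :=
      mul_le_mul_of_nonneg_left hlog hPpos.le
    calc P i * Real.log (R i / P i) ≤ P i * (R i / P i - 1) := h2
      _ = R i - P i := by field_simp

/-- peel one coordinate -/
lemma sid_peel (w : A) (c : (A → B) → ℝ) (k : (A → B) → B → ℝ)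
    (hc : ∀ f y, c (Function.update f w y) = c f)
    (hk : ∀ f y y', k (Function.update f w y) y' = k f y') :
    (∑ f : A → B, c f * k f (f w)) * (Fintype.card B : ℝ)
      = ∑ f : A → B, c f * ∑ y, k f y := by
  have h1 : (∑ f : A → B, c f * k f (f w)) * (Fintype.card B : ℝ)
      = ∑ p : (A → B) × B, c p.1 * k p.1 (p.1 w) := by
    rw [Fintype.sum_prod_type]
    rw [Finset.sum_mul]
    refine Finset.sum_congr rfl (fun f _ => ?_)
    simp [Finset.sum_const, Finset.card_univ, nsmul_eq_mul, mul_comm]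
  have e : (A → B) × B → (A → B) × B := fun p => (Function.update p.1 w p.2, p.1 w)
  have hinv : Function.Involutive (fun p : (A → B) × B => (Function.update p.1 w p.2, p.1 w)) := by
    intro p
    simp [Function.update_idem, Function.update_self, Function.update_eq_self]
  have h2 : ∑ p : (A → B) × B, c p.1 * k p.1 (p.1 w)
      = ∑ p : (A → B) × B, c p.1 * k p.1 p.2 := by
    refine Fintype.sum_bijective _ hinv.bijective _ _ ?_
    intro p
    rw [hc, hk]
  rw [h1, h2, Fintype.sum_prod_type]
  exact Finset.sum_congr rfl (fun f _ => by rw [Finset.mul_sum])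

lemma sid_sum_one : (∑ _f : A → B, (1:ℝ)) = (Fintype.card B : ℝ) ^ (Fintype.card A) := by
  simp [Finset.card_univ, Fintype.card_fun]

/-- product-form marginalization -/
lemma sid_gen (S : Finset A) : ∀ (k : A → B → ℝ) (c : (A → B) → ℝ),
    (∀ f a y, a ∈ S → c (Function.update f a y) = c f) →
    (Fintype.card B : ℝ) ^ S.card * ∑ f : A → B, (∏ a ∈ S, k a (f a)) * c f
      = (∏ a ∈ S, ∑ y, k a y) * ∑ f : A → B, c f := by
  induction S using Finset.cons_induction_on with
  | empty => intro k c _; simp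
  | @cons a S ha ih =>
    intro k c hc
    have hre : ∀ f : A → B, (∏ b ∈ Finset.cons a S ha, k b (f b)) * c f
        = ((∏ b ∈ S, k b (f b)) * c f) * k a (f a) := by
      intro f; rw [Finset.prod_cons]; ring
    have hpeel := sid_peel a (fun f => (∏ b ∈ S, k b (f b)) * c f) (fun _ y => k a y)
      (by
        intro f y
        have h1 : (∏ b ∈ S, k b (Function.update f a y b)) = ∏ b ∈ S, k b (f b) := by
          refine Finset.prod_congr rfl (fun b hb => ?_)
          have hba : b ≠ a := fun h => ha (h ▸ hb)
          rw [Function.update_of_ne hba]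
        rw [h1, hc f a y (Finset.mem_cons_self a S)])
      (by intro f y y'; rfl)
    have ihh := ih k c (fun f b y hb => hc f b y (Finset.mem_cons_of_mem hb))
    rw [Finset.card_cons, Finset.prod_cons]
    calc (Fintype.card B : ℝ) ^ (S.card + 1) * ∑ f : A → B, (∏ b ∈ Finset.cons a S ha, k b (f b)) * c f
        = (Fintype.card B : ℝ) ^ S.card *
            ((∑ f : A → B, ((∏ b ∈ S, k b (f b)) * c f) * k a (f a)) * (Fintype.card B : ℝ)) := by
          rw [Finset.sum_congr rfl (fun f _ => hre f)]; ring
      _ = (Fintype.card B : ℝ) ^ S.card *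
            ∑ f : A → B, ((∏ b ∈ S, k b (f b)) * c f) * ∑ y, k a y := by rw [hpeel]
      _ = (∑ y, k a y) * ((Fintype.card B : ℝ) ^ S.card * ∑ f : A → B, (∏ b ∈ S, k b (f b)) * c f) := by
          rw [← Finset.sum_mul]; ring
      _ = (∑ y, k a y) * ((∏ b ∈ S, ∑ y, k b y) * ∑ f : A → B, c f) := by rw [ihh]
      _ = ((∑ y, k a y) * ∏ b ∈ S, ∑ y, k b y) * ∑ f : A → B, c f := by ring


variable {A B : Type*} [Fintype A] [Fintype B]

def Ar (G : SimpleGraph B) (x y : B) : ℝ := if G.Adj x y then 1 else 0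
def dR (G : SimpleGraph B) (y : B) : ℝ := (G.degree y : ℝ)
def eps (G : SimpleGraph B) : ℝ := ∑ y, dR G y
def Jw (G : SimpleGraph B) (N : Finset A) (x : B) (f : A → B) : ℝ :=
  (∏ b ∈ N, Ar G x (f b)) / (eps G * dR G x ^ (N.card - 1))
def Mw (G : SimpleGraph B) (N : Finset A) (f : A → B) : ℝ := ∑ x, Jw G N x f
def kap (G : SimpleGraph B) (N : Finset A) (w : A) (f : A → B) : ℝ :=
  Jw G N (f w) f / Mw G N f

lemma Ar_nonneg (G : SimpleGraph B) (x y : B) : 0 ≤ Ar G x y := by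
  unfold Ar; split <;> norm_num

lemma Ar_comm (G : SimpleGraph B) (x y : B) : Ar G x y = Ar G y x := by
  unfold Ar; rw [SimpleGraph.adj_comm]

lemma dR_nonneg (G : SimpleGraph B) (y : B) : 0 ≤ dR G y := Nat.cast_nonneg _

lemma dR_pos_of_adj {G : SimpleGraph B} {x y : B} (h : G.Adj x y) : 0 < dR G x := by
  unfold dR
  have : 0 < G.degree x := by
    rw [SimpleGraph.degree_pos_iff_exists_adj]; exact ⟨y, h⟩
  exact_mod_cast this

lemma Ar_eq_zero_of_dR {G : SimpleGraph B} {x : B} (h : dR G x = 0) (y : B) :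
    Ar G x y = 0 := by
  unfold Ar
  rw [if_neg]
  intro hadj
  exact absurd h (dR_pos_of_adj hadj).ne'

lemma sum_Ar (G : SimpleGraph B) (x : B) : ∑ y, Ar G x y = dR G x := by
  unfold Ar dR
  rw [Finset.sum_boole]
  congr 1
  rw [SimpleGraph.degree, SimpleGraph.neighborFinset_eq_filter]

lemma sum_Ar' (G : SimpleGraph B) (y : B) : ∑ x, Ar G x y = dR G y := by
  simp_rw [fun x => Ar_comm G x y]
  exact sum_Ar G y

lemma eps_nonneg (G : SimpleGraph B) : 0 ≤ eps G :=
  Finset.sum_nonneg (fun y _ => dR_nonneg G y)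

lemma eps_eq (G : SimpleGraph B) : eps G = 2 * (G.edgeFinset.card : ℝ) := by
  unfold eps dR
  rw [← Nat.cast_sum]
  rw [SimpleGraph.sum_degrees_eq_twice_card_edges]
  push_cast; ring

lemma prod_Ar_ne_zero_iff {G : SimpleGraph B} {N : Finset A} {x : B} {f : A → B} :
    (∏ b ∈ N, Ar G x (f b)) ≠ 0 ↔ ∀ b ∈ N, G.Adj x (f b) := by
  rw [Finset.prod_ne_zero_iff]
  apply forall_congr'; intro b; apply imp_congr_right; intro _
  unfold Ar; split <;> simp_all

lemma prod_Ar_eq_one {G : SimpleGraph B} {N : Finset A} {x : B} {f : A → B}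
    (h : ∀ b ∈ N, G.Adj x (f b)) : (∏ b ∈ N, Ar G x (f b)) = 1 := by
  apply Finset.prod_eq_one
  intro b hb; unfold Ar; rw [if_pos (h b hb)]

lemma Jw_nonneg (G : SimpleGraph B) (N : Finset A) (x : B) (f : A → B) :
    0 ≤ Jw G N x f :=
  div_nonneg (Finset.prod_nonneg fun b _ => Ar_nonneg G x (f b))
    (mul_nonneg (eps_nonneg G) (pow_nonneg (dR_nonneg G x) _))

lemma Mw_nonneg (G : SimpleGraph B) (N : Finset A) (f : A → B) : 0 ≤ Mw G N f :=
  Finset.sum_nonneg fun x _ => Jw_nonneg G N x f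

lemma kap_nonneg (G : SimpleGraph B) (N : Finset A) (w : A) (f : A → B) :
    0 ≤ kap G N w f := div_nonneg (Jw_nonneg _ _ _ _) (Mw_nonneg _ _ _)

lemma Jw_update {G : SimpleGraph B} {N : Finset A} (x : B) (f : A → B) {a : A}
    (ha : a ∉ N) (y : B) : Jw G N x (Function.update f a y) = Jw G N x f := by
  unfold Jw
  congr 1
  refine Finset.prod_congr rfl (fun b hb => ?_)
  have hba : b ≠ a := fun h => ha (h ▸ hb)
  rw [Function.update_of_ne hba]

lemma Mw_update {G : SimpleGraph B} {N : Finset A} (f : A → B) {a : A}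
    (ha : a ∉ N) (y : B) : Mw G N (Function.update f a y) = Mw G N f :=
  Finset.sum_congr rfl (fun x _ => Jw_update x f ha y)

lemma kap_update {G : SimpleGraph B} {N : Finset A} {w : A} (f : A → B) {a : A}
    (ha : a ∉ N) (haw : a ≠ w) (y : B) :
    kap G N w (Function.update f a y) = kap G N w f := by
  unfold kap
  rw [Mw_update f ha y, Jw_update _ f ha y, Function.update_of_ne haw.symm]

lemma Jw_pos {G : SimpleGraph B} {N : Finset A} {x : B} {f : A → B}
    (heps : 0 < eps G) (h : ∀ b ∈ N, G.Adj x (f b)) (hx : 0 < dR G x) :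
    0 < Jw G N x f := by
  unfold Jw
  rw [prod_Ar_eq_one h]
  exact div_pos one_pos (mul_pos heps (pow_pos hx _))

lemma Mw_pos {G : SimpleGraph B} {N : Finset A} {f : A → B} (heps : 0 < eps G)
    (x : B) (h : ∀ b ∈ N, G.Adj x (f b)) (hx : 0 < dR G x) : 0 < Mw G N f :=
  Finset.sum_pos' (fun x' _ => Jw_nonneg G N x' f)
    ⟨x, Finset.mem_univ x, Jw_pos heps h hx⟩

lemma cancel_pow {d e : ℝ} (hd : 0 ≤ d) {k : ℕ} (hk : 1 ≤ k) :
    d ^ k / (e * d ^ (k - 1)) = d / e := by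
  rcases eq_or_lt_of_le hd with h | h
  · rw [← h, zero_pow (by omega : k ≠ 0), zero_div, zero_div]
  · have h1 : d ^ k = d ^ (k - 1) * d := by
      rw [← pow_succ]; congr 1; omega
    rw [h1, mul_comm e]
    exact mul_div_mul_left _ _ (pow_ne_zero _ h.ne')

lemma sum_Jw (G : SimpleGraph B) (N : Finset A) (hN : N.Nonempty) (x : B) :
    (Fintype.card B : ℝ) ^ N.card * ∑ f : A → B, Jw G N x f
      = (Fintype.card B : ℝ) ^ (Fintype.card A) * (dR G x / eps G) := by
  have hgen := sid_gen N (fun _ y => Ar G x y) (fun _ => (1:ℝ)) (fun _ _ _ _ => rfl)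
  have e1 : (∑ f : A → B, Jw G N x f)
      = (∑ f : A → B, (∏ a ∈ N, Ar G x (f a)) * (1:ℝ))
          * (eps G * dR G x ^ (N.card - 1))⁻¹ := by
    rw [Finset.sum_mul]
    refine Finset.sum_congr rfl (fun f _ => ?_)
    unfold Jw; rw [mul_one, div_eq_mul_inv]
  have key : dR G x ^ N.card * (eps G * dR G x ^ (N.card - 1))⁻¹ = dR G x / eps G := by
    rw [← div_eq_mul_inv]; exact cancel_pow (dR_nonneg G x) hN.card_pos
  calc (Fintype.card B : ℝ) ^ N.card * ∑ f : A → B, Jw G N x f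
      = ((Fintype.card B : ℝ) ^ N.card * ∑ f : A → B, (∏ a ∈ N, Ar G x (f a)) * (1:ℝ))
          * (eps G * dR G x ^ (N.card - 1))⁻¹ := by rw [e1]; ring
    _ = ((∏ _a ∈ N, dR G x) * ∑ _f : A → B, (1:ℝ))
          * (eps G * dR G x ^ (N.card - 1))⁻¹ := by
        rw [hgen, Finset.prod_congr rfl (fun a _ => sum_Ar G x)]
    _ = (Fintype.card B : ℝ) ^ (Fintype.card A)
          * (dR G x ^ N.card * (eps G * dR G x ^ (N.card - 1))⁻¹) := by
        rw [Finset.prod_const, sid_sum_one]; ring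
    _ = (Fintype.card B : ℝ) ^ (Fintype.card A) * (dR G x / eps G) := by rw [key]

lemma sum_dR_div (G : SimpleGraph B) (heps : eps G ≠ 0) :
    ∑ x, dR G x / eps G = 1 := by
  rw [← Finset.sum_div]
  exact div_self heps

lemma sum_Mw (G : SimpleGraph B) (N : Finset A) (hN : N.Nonempty) (heps : eps G ≠ 0) :
    (Fintype.card B : ℝ) ^ N.card * ∑ f : A → B, Mw G N f
      = (Fintype.card B : ℝ) ^ (Fintype.card A) := by
  unfold Mw
  rw [Finset.sum_comm, Finset.mul_sum,
    Finset.sum_congr rfl (fun x _ => sum_Jw G N hN x), ← Finset.mul_sum,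
    sum_dR_div G heps, mul_one]

lemma sum_Jw_phi (G : SimpleGraph B) (N : Finset A) (hN : N.Nonempty) (φ : B → ℝ) :
    (Fintype.card B : ℝ) ^ N.card * ∑ f : A → B, ∑ y, Jw G N y f * φ y
      = (Fintype.card B : ℝ) ^ (Fintype.card A) * ∑ y, dR G y / eps G * φ y := by
  rw [Finset.sum_comm, Finset.mul_sum, Finset.mul_sum]
  refine Finset.sum_congr rfl (fun y _ => ?_)
  rw [← Finset.sum_mul, ← mul_assoc, sum_Jw G N hN y]
  ring

lemma sum_Mw_phi (G : SimpleGraph B) (N : Finset A) (hN : N.Nonempty)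
    (heps : eps G ≠ 0) {b₀ : A} (hb₀ : b₀ ∈ N) (φ : B → ℝ) :
    (Fintype.card B : ℝ) ^ N.card * ∑ f : A → B, Mw G N f * φ (f b₀)
      = (Fintype.card B : ℝ) ^ (Fintype.card A) * ∑ y, dR G y / eps G * φ y := by
  have h0 : ∑ f : A → B, Mw G N f * φ (f b₀)
      = ∑ x, ∑ f : A → B, Jw G N x f * φ (f b₀) := by
    rw [Finset.sum_comm]
    refine Finset.sum_congr rfl (fun f _ => ?_)
    unfold Mw; rw [Finset.sum_mul]
  have hx : ∀ x : B, (Fintype.card B : ℝ) ^ N.card * ∑ f : A → B, Jw G N x f * φ (f b₀)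
      = (Fintype.card B : ℝ) ^ (Fintype.card A) * ((1 / eps G) * ∑ y, Ar G x y * φ y) := by
    intro x
    have hgen := sid_gen (N.erase b₀) (fun _ y => Ar G x y)
      (fun f => Ar G x (f b₀) * φ (f b₀))
      (by
        intro f a y ha
        have hab : b₀ ≠ a := fun h => (Finset.notMem_erase b₀ N) (h ▸ ha)
        rw [Function.update_of_ne hab])
    have hpeel := sid_peel b₀ (fun _ => (1:ℝ)) (fun _ y => Ar G x y * φ y)
      (fun _ _ => rfl) (fun _ _ _ => rfl)
    -- rewrite hgen's sum into TN form
    have hTN : ∀ f : A → B,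
        (∏ a ∈ N.erase b₀, Ar G x (f a)) * (Ar G x (f b₀) * φ (f b₀))
          = (∏ a ∈ N, Ar G x (f a)) * φ (f b₀) := by
      intro f
      rw [← Finset.mul_prod_erase N _ hb₀]; ring
    rw [Finset.sum_congr rfl (fun f _ => hTN f)] at hgen
    have hprodc : (∏ _a ∈ N.erase b₀, ∑ y, Ar G x y) = dR G x ^ (N.card - 1) := by
      rw [Finset.prod_congr rfl (fun a _ => sum_Ar G x), Finset.prod_const,
        Finset.card_erase_of_mem hb₀]
    rw [hprodc, Finset.card_erase_of_mem hb₀] at hgen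
    -- hpeel : (Σ_f 1 * (Ar x (f b₀) * φ (f b₀))) * nB = Σ_f 1 * Σ_y Ar x y * φ y
    simp only [one_mul] at hpeel
    have hconst : ∑ f : A → B, ∑ y, Ar G x y * φ y
        = (Fintype.card B : ℝ) ^ (Fintype.card A) * ∑ y, Ar G x y * φ y := by
      rw [Finset.sum_const, Finset.card_univ, nsmul_eq_mul, Fintype.card_fun]
      push_cast; ring
    rw [hconst] at hpeel
    -- combine: nB^(k-1) * TN = dR^(k-1) * S, S * nB = nB^NA * Σ Arφ
    -- where S := Σ_f Ar x (f b₀) * φ (f b₀), TN := Σ_f (∏_N Ar) * φ (f b₀)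
    have hJw : ∀ f : A → B, Jw G N x f * φ (f b₀)
        = ((∏ a ∈ N, Ar G x (f a)) * φ (f b₀)) * (eps G * dR G x ^ (N.card - 1))⁻¹ := by
      intro f; unfold Jw; rw [div_eq_mul_inv]; ring
    rw [Finset.sum_congr rfl (fun f _ => hJw f), ← Finset.sum_mul]
    rcases eq_or_ne (dR G x) 0 with hd | hd
    · have hAz : ∀ y, Ar G x y * φ y = 0 := fun y => by
        rw [Ar_eq_zero_of_dR hd y, zero_mul]
      have hsz : ∑ y, Ar G x y * φ y = 0 := Finset.sum_eq_zero (fun y _ => hAz y)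
      have hTz : ∀ f : A → B, (∏ a ∈ N, Ar G x (f a)) * φ (f b₀) = 0 := by
        intro f
        obtain ⟨b₁, hb₁⟩ := hN
        rw [Finset.prod_eq_zero hb₁ (by rw [Ar_eq_zero_of_dR hd])]
        ring
      rw [Finset.sum_congr rfl (fun f _ => hTz f)]
      simp [hsz]
    · -- dR G x ≠ 0
      have hNc : 1 ≤ N.card := hN.card_pos
      have hk1 : (Fintype.card B:ℝ) ^ N.card = (Fintype.card B:ℝ) ^ (N.card - 1) * (Fintype.card B:ℝ) := by
        rw [← pow_succ]; congr 1; omega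
      have hSval : (∑ f : A → B, Ar G x (f b₀) * φ (f b₀))
          = (Fintype.card B : ℝ) ^ (Fintype.card A) * (∑ y, Ar G x y * φ y) / (Fintype.card B : ℝ) := by
        rw [← hpeel]
        have : Nonempty B := ⟨x⟩
        have hnB : (0:ℝ) < (Fintype.card B : ℝ) := by exact_mod_cast Fintype.card_pos
        field_simp
      rw [hk1]
      calc (Fintype.card B:ℝ) ^ (N.card - 1) * (Fintype.card B:ℝ)
            * ((∑ f : A → B, (∏ a ∈ N, Ar G x (f a)) * φ (f b₀)) * (eps G * dR G x ^ (N.card - 1))⁻¹)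
          = ((Fintype.card B:ℝ) ^ (N.card - 1) * ∑ f : A → B, (∏ a ∈ N, Ar G x (f a)) * φ (f b₀))
              * (Fintype.card B:ℝ) * (eps G * dR G x ^ (N.card - 1))⁻¹ := by ring
        _ = (dR G x ^ (N.card - 1) * ∑ f : A → B, Ar G x (f b₀) * φ (f b₀))
              * (Fintype.card B:ℝ) * (eps G * dR G x ^ (N.card - 1))⁻¹ := by rw [hgen]
        _ = dR G x ^ (N.card - 1) * ((∑ f : A → B, Ar G x (f b₀) * φ (f b₀)) * (Fintype.card B:ℝ))
              * (eps G * dR G x ^ (N.card - 1))⁻¹ := by ring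
        _ = dR G x ^ (N.card - 1) * ((Fintype.card B : ℝ) ^ (Fintype.card A) * (∑ y, Ar G x y * φ y))
              * (eps G * dR G x ^ (N.card - 1))⁻¹ := by
            rw [hSval]
            have : Nonempty B := ⟨x⟩
            have hnB : ((Fintype.card B : ℝ)) ≠ 0 := by
              have h := Fintype.card_pos (α := B)
              positivity
            field_simp
        _ = (Fintype.card B : ℝ) ^ (Fintype.card A) * ((1 / eps G) * ∑ y, Ar G x y * φ y) := by
            have hpow : dR G x ^ (N.card - 1) ≠ 0 := pow_ne_zero _ hd
            field_simp
  calc (Fintype.card B : ℝ) ^ N.card * ∑ f : A → B, Mw G N f * φ (f b₀)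
      = ∑ x, (Fintype.card B : ℝ) ^ N.card * ∑ f : A → B, Jw G N x f * φ (f b₀) := by
        rw [h0, Finset.mul_sum]
    _ = ∑ x, (Fintype.card B : ℝ) ^ (Fintype.card A) * ((1 / eps G) * ∑ y, Ar G x y * φ y) := by
        exact Finset.sum_congr rfl (fun x _ => hx x)
    _ = (Fintype.card B : ℝ) ^ (Fintype.card A) * ((1 / eps G) * ∑ y, (∑ x, Ar G x y) * φ y) := by
        rw [← Finset.mul_sum]
        congr 1
        rw [← Finset.mul_sum]
        congr 1
        rw [Finset.sum_comm]
        exact Finset.sum_congr rfl (fun y _ => (Finset.sum_mul _ _ _).symm)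
    _ = (Fintype.card B : ℝ) ^ (Fintype.card A) * ∑ y, dR G y / eps G * φ y := by
        congr 1
        rw [Finset.mul_sum]
        refine Finset.sum_congr rfl (fun y _ => ?_)
        rw [sum_Ar' G y]; ring

lemma sid_prefM (G : SimpleGraph B) (V2 N₀ : Finset A) (u : A) (hN : N₀ ⊆ V2)
    (hNne : N₀.Nonempty) (hu : u ∉ V2) (Ψ : (A → B) → ℝ)
    (hΨ : ∀ (f : A → B) (a : A) (y : B), a ∉ N₀ → Ψ (Function.update f a y) = Ψ f) :
    (Fintype.card B : ℝ) ^ (1 + (V2.card - N₀.card))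
        * ∑ f : A → B, Jw G V2 (f u) f * Ψ f
      = ∑ f : A → B, Mw G N₀ f * Ψ f := by
  have huN : u ∉ N₀ := fun h => hu (hN h)
  -- peel u
  have hpeel := sid_peel u Ψ (fun f y => Jw G V2 y f)
    (fun f y => hΨ f u y huN)
    (fun f y y' => Jw_update y' f hu y)
  -- hpeel : (Σ_f Ψ f * Jw V2 (f u) f) * nB = Σ_f Ψ f * Σ_x Jw V2 x f
  have step1 : (∑ f : A → B, Jw G V2 (f u) f * Ψ f) * (Fintype.card B : ℝ)
      = ∑ x, ∑ f : A → B, Jw G V2 x f * Ψ f := by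
    calc (∑ f : A → B, Jw G V2 (f u) f * Ψ f) * (Fintype.card B : ℝ)
        = (∑ f : A → B, Ψ f * Jw G V2 (f u) f) * (Fintype.card B : ℝ) := by
          rw [Finset.sum_congr rfl (fun f _ => mul_comm (Jw G V2 (f u) f) (Ψ f))]
      _ = ∑ f : A → B, Ψ f * ∑ y, Jw G V2 y f := hpeel
      _ = ∑ f : A → B, ∑ y, Jw G V2 y f * Ψ f := by
          refine Finset.sum_congr rfl (fun f _ => ?_)
          rw [Finset.mul_sum]
          exact Finset.sum_congr rfl (fun y _ => mul_comm _ _)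
      _ = ∑ x, ∑ f : A → B, Jw G V2 x f * Ψ f := Finset.sum_comm
  -- per x reduction
  have hx : ∀ x : B, (Fintype.card B : ℝ) ^ (V2.card - N₀.card)
        * ∑ f : A → B, Jw G V2 x f * Ψ f
      = ∑ f : A → B, Jw G N₀ x f * Ψ f := by
    intro x
    have hgen := sid_gen (V2 \ N₀) (fun _ y => Ar G x y)
      (fun f => (∏ b ∈ N₀, Ar G x (f b)) * Ψ f)
      (by
        intro f a y ha
        have haN : a ∉ N₀ := (Finset.mem_sdiff.mp ha).2
        rw [hΨ f a y haN]
        congr 1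
        refine Finset.prod_congr rfl (fun b hb => ?_)
        have hba : b ≠ a := fun h => haN (h ▸ hb)
        rw [Function.update_of_ne hba])
    have hsplit : ∀ f : A → B, Jw G V2 x f * Ψ f
        = ((∏ b ∈ V2 \ N₀, Ar G x (f b)) * ((∏ b ∈ N₀, Ar G x (f b)) * Ψ f))
            * (eps G * dR G x ^ (V2.card - 1))⁻¹ := by
      intro f; unfold Jw
      rw [← Finset.prod_sdiff hN, div_eq_mul_inv]; ring
    have hprodc : (∏ _a ∈ V2 \ N₀, ∑ y, Ar G x y) = dR G x ^ (V2.card - N₀.card) := by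
      rw [Finset.prod_congr rfl (fun a _ => sum_Ar G x), Finset.prod_const,
        Finset.card_sdiff_of_subset hN]
    rw [hprodc] at hgen
    rw [Finset.card_sdiff_of_subset hN] at hgen
    rw [Finset.sum_congr rfl (fun f _ => hsplit f), ← Finset.sum_mul, ← mul_assoc, hgen]
    -- goal: (dR^(t-d) * Σ_f (∏_{N₀}Ar)*Ψ) * inv = Σ_f Jw N₀ x f * Ψ
    have hJN : ∀ f : A → B, Jw G N₀ x f * Ψ f
        = ((∏ b ∈ N₀, Ar G x (f b)) * Ψ f) * (eps G * dR G x ^ (N₀.card - 1))⁻¹ := by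
      intro f; unfold Jw; rw [div_eq_mul_inv]; ring
    rw [Finset.sum_congr rfl (fun f _ => hJN f), ← Finset.sum_mul]
    rcases eq_or_ne (dR G x) 0 with hd | hd
    · have hTz : ∀ f : A → B, (∏ b ∈ N₀, Ar G x (f b)) * Ψ f = 0 := by
        intro f
        obtain ⟨b₁, hb₁⟩ := hNne
        rw [Finset.prod_eq_zero hb₁ (by rw [Ar_eq_zero_of_dR hd])]
        ring
      rw [Finset.sum_congr rfl (fun f _ => hTz f)]
      simp
    · have h1d : 1 ≤ N₀.card := hNne.card_pos
      have hdt : N₀.card ≤ V2.card := Finset.card_le_card hN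
      have hppow : dR G x ^ (V2.card - 1)
          = dR G x ^ (V2.card - N₀.card) * dR G x ^ (N₀.card - 1) := by
        rw [← pow_add]; congr 1; omega
      rw [hppow]
      have hne1 : dR G x ^ (V2.card - N₀.card) ≠ 0 := pow_ne_zero _ hd
      rcases eq_or_ne (eps G) 0 with he | he
      · simp [he]
      · field_simp
  -- assemble
  calc (Fintype.card B : ℝ) ^ (1 + (V2.card - N₀.card)) * ∑ f : A → B, Jw G V2 (f u) f * Ψ f
      = (Fintype.card B : ℝ) ^ (V2.card - N₀.card)
          * ((∑ f : A → B, Jw G V2 (f u) f * Ψ f) * (Fintype.card B : ℝ)) := by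
        rw [pow_add]; ring
    _ = (Fintype.card B : ℝ) ^ (V2.card - N₀.card) * ∑ x, ∑ f : A → B, Jw G V2 x f * Ψ f := by
        rw [step1]
    _ = ∑ x, (Fintype.card B : ℝ) ^ (V2.card - N₀.card) * ∑ f : A → B, Jw G V2 x f * Ψ f := by
        rw [Finset.mul_sum]
    _ = ∑ x, ∑ f : A → B, Jw G N₀ x f * Ψ f := Finset.sum_congr rfl (fun x _ => hx x)
    _ = ∑ f : A → B, ∑ x, Jw G N₀ x f * Ψ f := Finset.sum_comm
    _ = ∑ f : A → B, Mw G N₀ f * Ψ f := by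
        refine Finset.sum_congr rfl (fun f _ => ?_)
        unfold Mw; rw [Finset.sum_mul]

lemma pref_Mw_pos {G : SimpleGraph B} {V2 : Finset A} (heps : 0 < eps G)
    (hV2 : V2.Nonempty) {N : Finset A} (hNsub : N ⊆ V2) {u : A} {f : A → B}
    (h : Jw G V2 (f u) f ≠ 0) : 0 < Mw G N f := by
  have hnum : (∏ b ∈ V2, Ar G (f u) (f b)) ≠ 0 := by
    intro hnum
    exact h (by unfold Jw; rw [hnum, zero_div])
  have hadj : ∀ b ∈ V2, G.Adj (f u) (f b) := prod_Ar_ne_zero_iff.mp hnum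
  obtain ⟨b₀, hb₀⟩ := hV2
  exact Mw_pos heps (f u) (fun b hb => hadj b (hNsub hb)) (dR_pos_of_adj (hadj b₀ hb₀))

lemma sid_peelK (G : SimpleGraph B) (V2 : Finset A) (u : A) (NH : A → Finset A)
    (heps : 0 < eps G) (hV2 : V2.Nonempty) (hu : u ∉ V2)
    (S : Finset A) :
    u ∉ S → (∀ w ∈ S, w ∉ V2) → (∀ w ∈ S, NH w ⊆ V2) →
    ∀ Φ : (A → B) → ℝ,
      (∀ (f : A → B) (w : A) (y : B), w ∈ S → Φ (Function.update f w y) = Φ f) →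
    (Fintype.card B : ℝ) ^ S.card *
        ∑ f : A → B, Jw G V2 (f u) f * (∏ w ∈ S, kap G (NH w) w f) * Φ f
      = ∑ f : A → B, Jw G V2 (f u) f * Φ f := by
  induction S using Finset.cons_induction_on with
  | empty => intro _ _ _ Φ _; simp
  | @cons w₁ S hw₁ ih =>
    intro hSu hSV2 hSNH Φ hΦ
    have hw₁V2 : w₁ ∉ V2 := hSV2 w₁ (Finset.mem_cons_self w₁ S)
    have hw₁NH : ∀ w ∈ Finset.cons w₁ S hw₁, w₁ ∉ NH w :=
      fun w hw h => hw₁V2 (hSNH w hw h)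
    have huw₁ : u ≠ w₁ := fun h => hSu (h ▸ Finset.mem_cons_self w₁ S)
    set c : (A → B) → ℝ :=
      fun f => Jw G V2 (f u) f * (∏ w ∈ S, kap G (NH w) w f) * Φ f with hc_def
    have hre : ∀ f : A → B,
        Jw G V2 (f u) f * (∏ w ∈ Finset.cons w₁ S hw₁, kap G (NH w) w f) * Φ f
          = c f * (Jw G (NH w₁) (f w₁) f / Mw G (NH w₁) f) := by
      intro f
      rw [hc_def, Finset.prod_cons]
      unfold kap
      ring
    have hpeel := sid_peel w₁ c
      (fun f y => Jw G (NH w₁) y f / Mw G (NH w₁) f)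
      (by
        intro f y
        rw [hc_def]
        beta_reduce
        rw [Function.update_of_ne huw₁,
          Jw_update _ f hw₁V2 y,
          hΦ f w₁ y (Finset.mem_cons_self w₁ S)]
        congr 1
        congr 1
        refine Finset.prod_congr rfl (fun w hw => ?_)
        have hww₁ : w₁ ≠ w := fun h => hw₁ (h ▸ hw)
        exact kap_update f (hw₁NH w (Finset.mem_cons_of_mem hw)) hww₁ y)
      (by
        intro f y y'
        rw [Jw_update _ f (hw₁NH w₁ (Finset.mem_cons_self w₁ S)) y,
          Mw_update f (hw₁NH w₁ (Finset.mem_cons_self w₁ S)) y])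
    have hsum1 : ∀ f : A → B,
        c f * ∑ y, Jw G (NH w₁) y f / Mw G (NH w₁) f = c f := by
      intro f
      rw [← Finset.sum_div]
      have : (∑ y, Jw G (NH w₁) y f) = Mw G (NH w₁) f := rfl
      rw [this]
      rcases eq_or_ne (Mw G (NH w₁) f) 0 with hM | hM
      · have hpref : Jw G V2 (f u) f = 0 := by
          by_contra hpref
          exact (pref_Mw_pos heps hV2 (hSNH w₁ (Finset.mem_cons_self w₁ S)) hpref).ne' hM
        rw [hc_def]; simp [hpref]
      · rw [div_self hM, mul_one]
    have ihh := ih (fun h => hSu (Finset.mem_cons_of_mem h))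
      (fun w hw => hSV2 w (Finset.mem_cons_of_mem hw))
      (fun w hw => hSNH w (Finset.mem_cons_of_mem hw))
      Φ (fun f w y hw => hΦ f w y (Finset.mem_cons_of_mem hw))
    calc (Fintype.card B : ℝ) ^ (Finset.cons w₁ S hw₁).card *
          ∑ f : A → B, Jw G V2 (f u) f * (∏ w ∈ Finset.cons w₁ S hw₁, kap G (NH w) w f) * Φ f
        = (Fintype.card B : ℝ) ^ S.card *
            ((∑ f : A → B, c f * (Jw G (NH w₁) (f w₁) f / Mw G (NH w₁) f))
              * (Fintype.card B : ℝ)) := by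
          rw [Finset.card_cons, Finset.sum_congr rfl (fun f _ => hre f), pow_succ]; ring
      _ = (Fintype.card B : ℝ) ^ S.card *
            ∑ f : A → B, c f * ∑ y, Jw G (NH w₁) y f / Mw G (NH w₁) f := by rw [hpeel]
      _ = (Fintype.card B : ℝ) ^ S.card * ∑ f : A → B, c f := by
          rw [Finset.sum_congr rfl (fun f _ => hsum1 f)]
      _ = ∑ f : A → B, Jw G V2 (f u) f * Φ f := ihh

end SidAux

/-- Theorem 1: Sidorenko's conjecture holds for every bipartite
graph `H` with a vertex complete to the other part: `t_H(G) ≥ t_{K₂}(G)^m`. -/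
theorem stmt7 {A B : Type*} [Fintype A] [Fintype B] [Nonempty B]
    (H : SimpleGraph A) (V1 V2 : Finset A)
    (hdisj : Disjoint V1 V2) (hcover : V1 ∪ V2 = Finset.univ)
    (hbip : ∀ a b, H.Adj a b → (a ∈ V1 ∧ b ∈ V2) ∨ (a ∈ V2 ∧ b ∈ V1))
    (u : A) (hu : u ∈ V1) (hcomplete : ∀ b ∈ V2, H.Adj u b)
    (m : ℕ) (hm : H.edgeFinset.card = m)
    (G : SimpleGraph B) :
    (2 * (G.edgeFinset.card : ℝ) / (Fintype.card B : ℝ) ^ 2) ^ m ≤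
      (homCount H G : ℝ) / (Fintype.card B : ℝ) ^ (Fintype.card A) := by
  classical
  have hnB : (0:ℝ) < (Fintype.card B : ℝ) := by exact_mod_cast Fintype.card_pos
  rcases Nat.eq_zero_or_pos m with hm0 | hmpos
  · -- m = 0 : no edges in H, all maps are homs
    subst hm0
    have hnoadj : ∀ a b, ¬ H.Adj a b := by
      intro a b hab
      have h1 : s(a, b) ∈ H.edgeFinset := SimpleGraph.mem_edgeFinset.mpr hab
      have h2 : H.edgeFinset = ∅ := Finset.card_eq_zero.mp hm
      rw [h2] at h1
      exact absurd h1 (Finset.notMem_empty _)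
    have hhom : homCount H G = (Fintype.card B) ^ (Fintype.card A) := by
      unfold homCount
      rw [Finset.filter_true_of_mem (fun f _ => fun a b hab => absurd hab (hnoadj a b))]
      rw [Finset.card_univ, Fintype.card_fun]
    rw [hhom, pow_zero]
    push_cast
    rw [div_self (by positivity)]
  -- m ≥ 1 : H has an edge, so V2 is nonempty
  have hedge : ∃ a b, H.Adj a b := by
    by_contra h
    push_neg at h
    have h2 : H.edgeFinset = ∅ := by
      rw [Finset.eq_empty_iff_forall_notMem]
      intro e he
      induction e with
      | h a b =>
        exact h a b (SimpleGraph.mem_edgeFinset.mp he)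
    rw [h2] at hm
    simp at hm
    omega
  obtain ⟨a₀, b₀, hab₀⟩ := hedge
  have hV2ne : V2.Nonempty := by
    rcases hbip a₀ b₀ hab₀ with ⟨_, hb⟩ | ⟨ha, _⟩
    · exact ⟨b₀, hb⟩
    · exact ⟨a₀, ha⟩
  rcases Nat.eq_zero_or_pos G.edgeFinset.card with hG0 | hGpos
  · -- G has no edges
    rw [hG0]
    push_cast
    rw [mul_zero, zero_div, zero_pow (by omega : m ≠ 0)]
    positivity
  -- main case
  have heps : 0 < eps G := by
    rw [eps_eq]
    have : (0:ℝ) < (G.edgeFinset.card : ℝ) := by exact_mod_cast hGpos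
    linarith
  have hepsne : eps G ≠ 0 := heps.ne'
  have hu2 : u ∉ V2 := Finset.disjoint_left.mp hdisj hu
  have hWV2 : ∀ w ∈ V1.erase u, w ∉ V2 := fun w hw =>
    Finset.disjoint_left.mp hdisj (Finset.mem_of_mem_erase hw)
  have huW : u ∉ V1.erase u := Finset.notMem_erase u V1
  have hNHV1 : ∀ w ∈ V1, H.neighborFinset w ⊆ V2 := by
    intro w hw b hb
    have hadj : H.Adj w b := by
      rw [SimpleGraph.mem_neighborFinset] at hb; exact hb
    rcases hbip w b hadj with ⟨_, h2⟩ | ⟨h1, _⟩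
    · exact h2
    · exact absurd h1 (Finset.disjoint_left.mp hdisj hw)
  have hNHW : ∀ w ∈ V1.erase u, H.neighborFinset w ⊆ V2 :=
    fun w hw => hNHV1 w (Finset.mem_of_mem_erase hw)
  have hNu : H.neighborFinset u = V2 := by
    ext b
    rw [SimpleGraph.mem_neighborFinset]
    constructor
    · intro hadj
      rcases hbip u b hadj with ⟨_, h2⟩ | ⟨h1, _⟩
      · exact h2
      · exact absurd h1 hu2
    · exact hcomplete b
  have hNA : Fintype.card A = 1 + V2.card + (V1.erase u).card := by
    have h1 : (V1.erase u).card + 1 = V1.card := Finset.card_erase_add_one hu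
    have h2 : V1.card + V2.card = Fintype.card A := by
      rw [← Finset.card_union_of_disjoint hdisj, hcover, Finset.card_univ]
    omega
  have hdeg : ∀ v, H.degree v = ∑ y, if H.Adj v y then 1 else 0 := by
    intro v
    have h1 : (∑ y, if H.Adj v y then 1 else 0)
        = #(Finset.univ.filter (fun y => H.Adj v y)) := by
      rw [Finset.sum_boole]; simp
    rw [h1, ← SimpleGraph.neighborFinset_eq_filter]
    rfl
  have hdegV1 : ∑ v ∈ V1, H.degree v = m := by
    have hsum : ∑ v, H.degree v = 2 * m := by
      rw [SimpleGraph.sum_degrees_eq_twice_card_edges, hm]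
    have hunion : ∑ v ∈ V1, H.degree v + ∑ v ∈ V2, H.degree v = 2 * m := by
      rw [← Finset.sum_union hdisj, hcover]
      exact hsum
    have hrestrict : ∀ v ∈ V1, H.degree v = ∑ y ∈ V2, (if H.Adj v y then 1 else 0) := by
      intro v hv
      rw [hdeg v]
      refine (Finset.sum_subset (Finset.subset_univ V2) ?_).symm
      intro y _ hy
      rw [if_neg]
      intro hadj
      rcases hbip v y hadj with ⟨_, h2⟩ | ⟨h1, _⟩
      · exact hy h2
      · exact absurd h1 (Finset.disjoint_left.mp hdisj hv)
    have hrestrict2 : ∀ y ∈ V2, H.degree y = ∑ v ∈ V1, (if H.Adj y v then 1 else 0) := by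
      intro y hy
      rw [hdeg y]
      refine (Finset.sum_subset (Finset.subset_univ V1) ?_).symm
      intro v _ hv
      rw [if_neg]
      intro hadj
      rcases hbip y v hadj with ⟨h1, _⟩ | ⟨_, h2⟩
      · exact absurd h1 (Finset.disjoint_right.mp hdisj hy)
      · exact hv h2
    have hV1V2 : ∑ v ∈ V1, H.degree v = ∑ v ∈ V2, H.degree v := by
      rw [Finset.sum_congr rfl hrestrict, Finset.sum_congr rfl hrestrict2]
      rw [Finset.sum_comm]
      refine Finset.sum_congr rfl (fun y hy => Finset.sum_congr rfl (fun v hv => ?_))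
      congr 1
      · rw [SimpleGraph.adj_comm]
    omega
  have hdu : H.degree u = V2.card := by
    rw [← SimpleGraph.card_neighborFinset_eq_degree, hNu]
  have hmt : m = V2.card + ∑ w ∈ V1.erase u, (H.neighborFinset w).card := by
    have h1 : H.degree u + ∑ w ∈ V1.erase u, H.degree w = ∑ v ∈ V1, H.degree v :=
      Finset.add_sum_erase V1 (fun v => H.degree v) hu
    have h2 : ∀ w, H.degree w = (H.neighborFinset w).card :=
      fun w => (SimpleGraph.card_neighborFinset_eq_degree H w).symm
    rw [hdu] at h1
    rw [hdegV1] at h1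
    rw [← h1]
    congr 1
  have hP' : (Fintype.card B : ℝ) * ∑ f : A → B, Jw G V2 (f u) f
      = ∑ f : A → B, Mw G V2 f := by
    have hP := sid_prefM G V2 V2 u Finset.Subset.rfl hV2ne hu2 (fun _ => (1:ℝ))
      (fun _ _ _ _ => rfl)
    simpa using hP
  have hpow_ne : ∀ k : ℕ, ((Fintype.card B : ℝ)) ^ k ≠ 0 := fun k => pow_ne_zero k hnB.ne'
  have hQ1 : ∑ f : A → B, Jw G V2 (f u) f * ∏ w ∈ V1.erase u, kap G (H.neighborFinset w) w f = 1 := by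
    have hK := sid_peelK G V2 u (fun w => H.neighborFinset w) heps hV2ne hu2 (V1.erase u)
      huW hWV2 hNHW (fun _ => (1:ℝ)) (fun _ _ _ _ => rfl)
    simp only [mul_one] at hK
    have hM := sum_Mw G V2 hV2ne hepsne
    have hcomb : (Fintype.card B:ℝ) ^ (V2.card + 1 + (V1.erase u).card)
          * ∑ f : A → B, Jw G V2 (f u) f * ∏ w ∈ V1.erase u, kap G (H.neighborFinset w) w f
        = (Fintype.card B:ℝ) ^ (Fintype.card A) * 1 := by
      rw [mul_one]
      calc (Fintype.card B:ℝ) ^ (V2.card + 1 + (V1.erase u).card)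
            * ∑ f : A → B, Jw G V2 (f u) f * ∏ w ∈ V1.erase u, kap G (H.neighborFinset w) w f
          = (Fintype.card B:ℝ) ^ V2.card * ((Fintype.card B:ℝ)
              * ((Fintype.card B:ℝ) ^ (V1.erase u).card * ∑ f : A → B, Jw G V2 (f u) f * ∏ w ∈ V1.erase u, kap G (H.neighborFinset w) w f)) := by
            rw [pow_add, pow_add, pow_one]; ring
        _ = (Fintype.card B:ℝ) ^ V2.card * ((Fintype.card B:ℝ)
              * ∑ f : A → B, Jw G V2 (f u) f) := by rw [hK]
        _ = (Fintype.card B:ℝ) ^ V2.card * ∑ f : A → B, Mw G V2 f := by rw [hP']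
        _ = (Fintype.card B:ℝ) ^ (Fintype.card A) := hM
    have hexp : Fintype.card A = V2.card + 1 + (V1.erase u).card := by omega
    rw [← hexp] at hcomb
    exact mul_left_cancel₀ (hpow_ne _) hcomb
  have hQu : ∑ f : A → B, (Jw G V2 (f u) f * ∏ w ∈ V1.erase u, kap G (H.neighborFinset w) w f) * Real.log (dR G (f u)) = ∑ y, dR G y / eps G * Real.log (dR G y) := by
    have hK := sid_peelK G V2 u (fun w => H.neighborFinset w) heps hV2ne hu2 (V1.erase u)
      huW hWV2 hNHW (fun f => Real.log (dR G (f u)))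
      (by
        intro f w y hw
        rw [Function.update_of_ne (fun h => (Finset.mem_erase.mp hw).1 h.symm)])
    have hpeel := sid_peel u (fun _ => (1:ℝ)) (fun f y => Jw G V2 y f * Real.log (dR G y))
      (fun _ _ => rfl)
      (fun f y y' => by rw [Jw_update _ f hu2 y])
    simp only [one_mul] at hpeel
    have hJφ := sum_Jw_phi G V2 hV2ne (fun y => Real.log (dR G y))
    have hcomb : (Fintype.card B:ℝ) ^ ((V1.erase u).card + 1 + V2.card)
          * ∑ f : A → B, (Jw G V2 (f u) f * ∏ w ∈ V1.erase u, kap G (H.neighborFinset w) w f) * Real.log (dR G (f u))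
        = (Fintype.card B:ℝ) ^ (Fintype.card A) * (∑ y, dR G y / eps G * Real.log (dR G y)) := by
      calc (Fintype.card B:ℝ) ^ ((V1.erase u).card + 1 + V2.card)
            * ∑ f : A → B, (Jw G V2 (f u) f * ∏ w ∈ V1.erase u, kap G (H.neighborFinset w) w f) * Real.log (dR G (f u))
          = (Fintype.card B:ℝ) ^ V2.card * (((Fintype.card B:ℝ) ^ (V1.erase u).card
              * ∑ f : A → B, (Jw G V2 (f u) f * ∏ w ∈ V1.erase u, kap G (H.neighborFinset w) w f) * Real.log (dR G (f u))) * (Fintype.card B:ℝ)) := by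
            rw [pow_add, pow_add, pow_one]; ring
        _ = (Fintype.card B:ℝ) ^ V2.card * ((∑ f : A → B, Jw G V2 (f u) f
              * Real.log (dR G (f u))) * (Fintype.card B:ℝ)) := by rw [hK]
        _ = (Fintype.card B:ℝ) ^ V2.card
              * ∑ f : A → B, ∑ y, Jw G V2 y f * Real.log (dR G y) := by rw [hpeel]
        _ = (Fintype.card B:ℝ) ^ (Fintype.card A) * (∑ y, dR G y / eps G * Real.log (dR G y)) := hJφ
    have hexp : Fintype.card A = (V1.erase u).card + 1 + V2.card := by omega
    rw [← hexp] at hcomb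
    exact mul_left_cancel₀ (hpow_ne _) hcomb
  have hQw : ∀ w₀ ∈ V1.erase u, 1 ≤ (H.neighborFinset w₀).card →
      ∑ f : A → B, (Jw G V2 (f u) f * ∏ w ∈ V1.erase u, kap G (H.neighborFinset w) w f) * Real.log (dR G (f w₀)) = ∑ y, dR G y / eps G * Real.log (dR G y) := by
    intro w₀ hw₀ hd1
    have hw₀u : w₀ ≠ u := (Finset.mem_erase.mp hw₀).1
    have hw₀V2 : w₀ ∉ V2 := hWV2 w₀ hw₀
    have hN₀ : H.neighborFinset w₀ ⊆ V2 := hNHW w₀ hw₀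
    have hN₀ne : (H.neighborFinset w₀).Nonempty := Finset.card_pos.mp hd1
    have hw₀N₀ : w₀ ∉ H.neighborFinset w₀ := fun h => hw₀V2 (hN₀ h)
    have hK := sid_peelK G V2 u (fun w => H.neighborFinset w) heps hV2ne hu2
      ((V1.erase u).erase w₀)
      (fun h => huW (Finset.mem_of_mem_erase h))
      (fun w hw => hWV2 w (Finset.mem_of_mem_erase hw))
      (fun w hw => hNHW w (Finset.mem_of_mem_erase hw))
      (fun f => kap G (H.neighborFinset w₀) w₀ f * Real.log (dR G (f w₀)))
      (by
        intro f w y hw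
        have hwW := Finset.mem_of_mem_erase hw
        have hww₀ : w ≠ w₀ := (Finset.mem_erase.mp hw).1
        rw [kap_update f (fun h => (hWV2 w hwW) (hN₀ h)) hww₀ y,
          Function.update_of_ne (fun h => hww₀ h.symm)])
    have hre : ∀ f : A → B,
        Jw G V2 (f u) f * (∏ w ∈ (V1.erase u).erase w₀, kap G (H.neighborFinset w) w f)
          * (kap G (H.neighborFinset w₀) w₀ f * Real.log (dR G (f w₀)))
        = (Jw G V2 (f u) f * ∏ w ∈ V1.erase u, kap G (H.neighborFinset w) w f) * Real.log (dR G (f w₀)) := by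
      intro f
      rw [← Finset.mul_prod_erase (V1.erase u) (fun w => kap G (H.neighborFinset w) w f) hw₀]
      ring
    rw [Finset.sum_congr rfl (fun f _ => hre f), Finset.card_erase_of_mem hw₀] at hK
    have hpeel := sid_peel w₀ (fun f => Jw G V2 (f u) f)
      (fun f y => Jw G (H.neighborFinset w₀) y f / Mw G (H.neighborFinset w₀) f
        * Real.log (dR G y))
      (by
        intro f y
        rw [Function.update_of_ne (fun h => hw₀u h.symm), Jw_update _ f hw₀V2 y])
      (by
        intro f y y'
        rw [Jw_update _ f hw₀N₀ y, Mw_update f hw₀N₀ y])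
    have hΨre : ∀ f : A → B,
        (∑ y, Jw G (H.neighborFinset w₀) y f / Mw G (H.neighborFinset w₀) f
          * Real.log (dR G y))
        = (∑ y, Jw G (H.neighborFinset w₀) y f * Real.log (dR G y))
            / Mw G (H.neighborFinset w₀) f := by
      intro f
      rw [Finset.sum_div]
      exact Finset.sum_congr rfl (fun y _ => by rw [div_mul_eq_mul_div])
    have hpeelR : (∑ f : A → B, Jw G V2 (f u) f
          * ∑ y, Jw G (H.neighborFinset w₀) y f / Mw G (H.neighborFinset w₀) f
            * Real.log (dR G y))
        = ∑ f : A → B, Jw G V2 (f u) f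
            * ((∑ y, Jw G (H.neighborFinset w₀) y f * Real.log (dR G y))
              / Mw G (H.neighborFinset w₀) f) :=
      Finset.sum_congr rfl (fun f _ => by rw [hΨre f])
    rw [hpeelR] at hpeel
    have hpeel2 : (∑ f : A → B, Jw G V2 (f u) f
          * (kap G (H.neighborFinset w₀) w₀ f * Real.log (dR G (f w₀))))
          * (Fintype.card B:ℝ)
        = ∑ f : A → B, Jw G V2 (f u) f
            * ((∑ y, Jw G (H.neighborFinset w₀) y f * Real.log (dR G y))
              / Mw G (H.neighborFinset w₀) f) := hpeel
    have hPM := sid_prefM G V2 (H.neighborFinset w₀) u hN₀ hN₀ne hu2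
      (fun f => (∑ y, Jw G (H.neighborFinset w₀) y f * Real.log (dR G y))
        / Mw G (H.neighborFinset w₀) f)
      (by
        intro f a y ha
        rw [Mw_update f ha y]
        congr 1
        exact Finset.sum_congr rfl (fun y' _ => by rw [Jw_update _ f ha y]))
    have hMΨ : ∀ f : A → B, Mw G (H.neighborFinset w₀) f *
        ((∑ y, Jw G (H.neighborFinset w₀) y f * Real.log (dR G y))
          / Mw G (H.neighborFinset w₀) f)
        = ∑ y, Jw G (H.neighborFinset w₀) y f * Real.log (dR G y) := by
      intro f
      rcases eq_or_ne (Mw G (H.neighborFinset w₀) f) 0 with hMz | hMz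
      · have hz : ∀ y, Jw G (H.neighborFinset w₀) y f = 0 := by
          have hzz := (Finset.sum_eq_zero_iff_of_nonneg
            (fun y _ => Jw_nonneg G (H.neighborFinset w₀) y f)).mp hMz
          exact fun y => hzz y (Finset.mem_univ y)
        rw [hMz, Finset.sum_eq_zero (fun y _ => by rw [hz y, zero_mul])]
        simp
      · rw [mul_div_cancel₀ _ hMz]
    rw [Finset.sum_congr rfl (fun f _ => hMΨ f)] at hPM
    have hJφ := sum_Jw_phi G (H.neighborFinset w₀) hN₀ne (fun y => Real.log (dR G y))
    have hd₀t : (H.neighborFinset w₀).card ≤ V2.card := Finset.card_le_card hN₀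
    have hs1 : 1 ≤ (V1.erase u).card := Finset.card_pos.mpr ⟨w₀, hw₀⟩
    have hcomb : (Fintype.card B:ℝ) ^ ((H.neighborFinset w₀).card
          + ((1 + (V2.card - (H.neighborFinset w₀).card))
          + (((V1.erase u).card - 1) + 1)))
          * ∑ f : A → B, (Jw G V2 (f u) f * ∏ w ∈ V1.erase u, kap G (H.neighborFinset w) w f) * Real.log (dR G (f w₀))
        = (Fintype.card B:ℝ) ^ (Fintype.card A) * (∑ y, dR G y / eps G * Real.log (dR G y)) := by
      calc (Fintype.card B:ℝ) ^ ((H.neighborFinset w₀).card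
            + ((1 + (V2.card - (H.neighborFinset w₀).card))
            + (((V1.erase u).card - 1) + 1)))
            * ∑ f : A → B, (Jw G V2 (f u) f * ∏ w ∈ V1.erase u, kap G (H.neighborFinset w) w f) * Real.log (dR G (f w₀))
          = (Fintype.card B:ℝ) ^ (H.neighborFinset w₀).card
            * ((Fintype.card B:ℝ) ^ (1 + (V2.card - (H.neighborFinset w₀).card))
            * (((Fintype.card B:ℝ) ^ ((V1.erase u).card - 1)
            * ∑ f : A → B, (Jw G V2 (f u) f * ∏ w ∈ V1.erase u, kap G (H.neighborFinset w) w f) * Real.log (dR G (f w₀))) * (Fintype.card B:ℝ))) := by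
            rw [pow_add, pow_add, pow_add, pow_one]; ring
        _ = (Fintype.card B:ℝ) ^ (H.neighborFinset w₀).card
            * ((Fintype.card B:ℝ) ^ (1 + (V2.card - (H.neighborFinset w₀).card))
            * ((∑ f : A → B, Jw G V2 (f u) f
                * (kap G (H.neighborFinset w₀) w₀ f
                  * Real.log (dR G (f w₀)))) * (Fintype.card B:ℝ))) := by rw [hK]
        _ = (Fintype.card B:ℝ) ^ (H.neighborFinset w₀).card
            * ((Fintype.card B:ℝ) ^ (1 + (V2.card - (H.neighborFinset w₀).card))
            * ∑ f : A → B, Jw G V2 (f u) f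
                * ((∑ y, Jw G (H.neighborFinset w₀) y f * Real.log (dR G y))
                  / Mw G (H.neighborFinset w₀) f)) := by rw [hpeel2]
        _ = (Fintype.card B:ℝ) ^ (H.neighborFinset w₀).card
            * ∑ f : A → B, ∑ y, Jw G (H.neighborFinset w₀) y f * Real.log (dR G y) := by
            rw [hPM]
        _ = (Fintype.card B:ℝ) ^ (Fintype.card A) * (∑ y, dR G y / eps G * Real.log (dR G y)) := hJφ
    have hexp : Fintype.card A = (H.neighborFinset w₀).card
        + ((1 + (V2.card - (H.neighborFinset w₀).card))
        + (((V1.erase u).card - 1) + 1)) := by omega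
    rw [← hexp] at hcomb
    exact mul_left_cancel₀ (hpow_ne _) hcomb
  have hQM0 : ∀ w₀ ∈ V1.erase u, (H.neighborFinset w₀).card = 0 →
      ∑ f : A → B, (Jw G V2 (f u) f * ∏ w ∈ V1.erase u, kap G (H.neighborFinset w) w f) * Real.log (Mw G (H.neighborFinset w₀) f)
        = Real.log (Fintype.card B : ℝ) - Real.log (eps G) := by
    intro w₀ _ hd0
    have hNe : H.neighborFinset w₀ = ∅ := Finset.card_eq_zero.mp hd0
    have hMconst : ∀ f : A → B, Mw G (H.neighborFinset w₀) f
        = (Fintype.card B : ℝ) / eps G := by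
      intro f
      rw [hNe]
      unfold Mw
      have hJ : ∀ x : B, Jw G (∅ : Finset A) x f = 1 / eps G := by
        intro x; unfold Jw; simp
      rw [Finset.sum_congr rfl (fun x _ => hJ x), Finset.sum_const, Finset.card_univ,
        nsmul_eq_mul]
      ring
    rw [Finset.sum_congr rfl (fun f _ => by rw [hMconst f]), ← Finset.sum_mul, hQ1, one_mul,
      Real.log_div hnB.ne' hepsne]
  have hQM : ∀ w₀ ∈ V1.erase u, 1 ≤ (H.neighborFinset w₀).card →
      ((H.neighborFinset w₀).card : ℝ) * ((∑ y, dR G y / eps G * Real.log (dR G y)) - Real.log (eps G))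
        ≤ ∑ f : A → B, (Jw G V2 (f u) f * ∏ w ∈ V1.erase u, kap G (H.neighborFinset w) w f) * Real.log (Mw G (H.neighborFinset w₀) f) := by
    intro w₀ hw₀ hd1
    have hN₀ : H.neighborFinset w₀ ⊆ V2 := hNHW w₀ hw₀
    have hN₀ne : (H.neighborFinset w₀).Nonempty := Finset.card_pos.mp hd1
    have hK := sid_peelK G V2 u (fun w => H.neighborFinset w) heps hV2ne hu2 (V1.erase u)
      huW hWV2 hNHW (fun f => Real.log (Mw G (H.neighborFinset w₀) f))
      (by
        intro f w y hw
        rw [Mw_update f (fun h => (hWV2 w hw) (hN₀ h)) y])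
    have hPM := sid_prefM G V2 (H.neighborFinset w₀) u hN₀ hN₀ne hu2
      (fun f => Real.log (Mw G (H.neighborFinset w₀) f))
      (by
        intro f a y ha
        rw [Mw_update f ha y])
    -- Gibbs with reference R
    have hRMadj : ∀ f : A → B, Mw G (H.neighborFinset w₀) f ≠ 0 →
        ∀ b ∈ H.neighborFinset w₀, 0 < dR G (f b) := by
      intro f hM b hb
      have hex : ∃ x, Jw G (H.neighborFinset w₀) x f ≠ 0 := by
        by_contra h
        push_neg at h
        exact hM (Finset.sum_eq_zero (fun x _ => h x))
      obtain ⟨x, hx⟩ := hex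
      have hnum : (∏ b ∈ H.neighborFinset w₀, Ar G x (f b)) ≠ 0 := by
        intro hz
        exact hx (by unfold Jw; rw [hz, zero_div])
      exact dR_pos_of_adj ((prod_Ar_ne_zero_iff.mp hnum b hb).symm)
    have hRpos : ∀ f : A → B, Mw G (H.neighborFinset w₀) f ≠ 0 →
        0 < ∏ b ∈ H.neighborFinset w₀, (dR G (f b) / eps G) := by
      intro f hM
      exact Finset.prod_pos (fun b hb => div_pos (hRMadj f hM b hb) heps)
    have hRsum : (∑ f : A → B, ∏ b ∈ H.neighborFinset w₀, (dR G (f b) / eps G))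
        = ∑ f : A → B, Mw G (H.neighborFinset w₀) f := by
      have hg := sid_gen (H.neighborFinset w₀) (fun _ y => dR G y / eps G)
        (fun _ => (1:ℝ)) (fun _ _ _ _ => rfl)
      simp only [mul_one] at hg
      rw [Finset.prod_congr rfl (fun b _ => sum_dR_div G hepsne), Finset.prod_const_one,
        one_mul, sid_sum_one] at hg
      have hMs := sum_Mw G (H.neighborFinset w₀) hN₀ne hepsne
      exact mul_left_cancel₀ (hpow_ne _) (hg.trans hMs.symm)
    have hgibbs := sid_gibbs (univ : Finset (A → B))
      (fun f => Mw G (H.neighborFinset w₀) f)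
      (fun f => ∏ b ∈ H.neighborFinset w₀, (dR G (f b) / eps G))
      (fun f _ => Mw_nonneg G _ f)
      (fun f _ => Finset.prod_nonneg (fun b _ => div_nonneg (dR_nonneg G _) (eps_nonneg G)))
      (fun f _ hM => (hRpos f hM).ne')
    rw [hRsum, sub_self] at hgibbs
    have htw : ∀ f : A → B, Mw G (H.neighborFinset w₀) f
          * Real.log ((∏ b ∈ H.neighborFinset w₀, (dR G (f b) / eps G))
            / Mw G (H.neighborFinset w₀) f)
        = Mw G (H.neighborFinset w₀) f
            * Real.log (∏ b ∈ H.neighborFinset w₀, (dR G (f b) / eps G))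
          - Mw G (H.neighborFinset w₀) f * Real.log (Mw G (H.neighborFinset w₀) f) := by
      intro f
      rcases eq_or_ne (Mw G (H.neighborFinset w₀) f) 0 with hM | hM
      · rw [hM]; ring
      · rw [Real.log_div (hRpos f hM).ne' hM]; ring
    rw [Finset.sum_congr rfl (fun f _ => htw f), Finset.sum_sub_distrib, sub_nonpos] at hgibbs
    -- hgibbs : Σ M logR ≤ Σ M logM
    have hlogR : ∀ f : A → B, Mw G (H.neighborFinset w₀) f
          * Real.log (∏ b ∈ H.neighborFinset w₀, (dR G (f b) / eps G))
        = ∑ b ∈ H.neighborFinset w₀, Mw G (H.neighborFinset w₀) f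
            * Real.log (dR G (f b) / eps G) := by
      intro f
      rcases eq_or_ne (Mw G (H.neighborFinset w₀) f) 0 with hM | hM
      · rw [hM]
        rw [Finset.sum_congr rfl (fun b _ => by rw [zero_mul])]
        simp
      · rw [Real.log_prod (fun b hb => (div_pos (hRMadj f hM b hb) heps).ne'),
          Finset.mul_sum]
    have hswap : (∑ f : A → B, Mw G (H.neighborFinset w₀) f
          * Real.log (∏ b ∈ H.neighborFinset w₀, (dR G (f b) / eps G)))
        = ∑ b ∈ H.neighborFinset w₀, ∑ f : A → B, Mw G (H.neighborFinset w₀) f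
            * Real.log (dR G (f b) / eps G) := by
      rw [Finset.sum_congr rfl (fun f _ => hlogR f)]
      exact Finset.sum_comm
    have hLle : (∑ y, dR G y / eps G * Real.log (dR G y / eps G))
        = (∑ y, dR G y / eps G * Real.log (dR G y)) - Real.log (eps G) := by
      have hterm : ∀ y : B, dR G y / eps G * Real.log (dR G y / eps G)
          = dR G y / eps G * Real.log (dR G y) - dR G y / eps G * Real.log (eps G) := by
        intro y
        rcases eq_or_ne (dR G y) 0 with h | h
        · rw [h]; simp
        · rw [Real.log_div h hepsne]; ring
      rw [Finset.sum_congr rfl (fun y _ => hterm y), Finset.sum_sub_distrib,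
        ← Finset.sum_mul, sum_dR_div G hepsne, one_mul]
    have hMb : ∀ b ∈ H.neighborFinset w₀,
        (Fintype.card B:ℝ) ^ (H.neighborFinset w₀).card
          * ∑ f : A → B, Mw G (H.neighborFinset w₀) f * Real.log (dR G (f b) / eps G)
        = (Fintype.card B:ℝ) ^ (Fintype.card A) * ((∑ y, dR G y / eps G * Real.log (dR G y)) - Real.log (eps G)) := by
      intro b hb
      rw [sum_Mw_phi G (H.neighborFinset w₀) hN₀ne hepsne hb
        (fun y => Real.log (dR G y / eps G)), hLle]
    -- multiply everything by nB^d₀ and collect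
    have hMlogR : (Fintype.card B:ℝ) ^ (H.neighborFinset w₀).card
          * (∑ f : A → B, Mw G (H.neighborFinset w₀) f
            * Real.log (∏ b ∈ H.neighborFinset w₀, (dR G (f b) / eps G)))
        = ((H.neighborFinset w₀).card : ℝ) * ((Fintype.card B:ℝ) ^ (Fintype.card A)
            * ((∑ y, dR G y / eps G * Real.log (dR G y)) - Real.log (eps G))) := by
      rw [hswap, Finset.mul_sum, Finset.sum_congr rfl hMb, Finset.sum_const,
        nsmul_eq_mul]
    have hd₀t : (H.neighborFinset w₀).card ≤ V2.card := Finset.card_le_card hN₀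
    have hchain : (Fintype.card B:ℝ) ^ (Fintype.card A)
          * ∑ f : A → B, (Jw G V2 (f u) f * ∏ w ∈ V1.erase u, kap G (H.neighborFinset w) w f) * Real.log (Mw G (H.neighborFinset w₀) f)
        = (Fintype.card B:ℝ) ^ (H.neighborFinset w₀).card
          * ∑ f : A → B, Mw G (H.neighborFinset w₀) f
            * Real.log (Mw G (H.neighborFinset w₀) f) := by
      have hexp : Fintype.card A = (H.neighborFinset w₀).card
          + ((1 + (V2.card - (H.neighborFinset w₀).card)) + (V1.erase u).card) := by omega
      rw [hexp]
      calc (Fintype.card B:ℝ) ^ ((H.neighborFinset w₀).card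
            + ((1 + (V2.card - (H.neighborFinset w₀).card)) + (V1.erase u).card))
            * ∑ f : A → B, (Jw G V2 (f u) f * ∏ w ∈ V1.erase u, kap G (H.neighborFinset w) w f) * Real.log (Mw G (H.neighborFinset w₀) f)
          = (Fintype.card B:ℝ) ^ (H.neighborFinset w₀).card
            * ((Fintype.card B:ℝ) ^ (1 + (V2.card - (H.neighborFinset w₀).card))
            * ((Fintype.card B:ℝ) ^ (V1.erase u).card
            * ∑ f : A → B, (Jw G V2 (f u) f * ∏ w ∈ V1.erase u, kap G (H.neighborFinset w) w f) * Real.log (Mw G (H.neighborFinset w₀) f))) := by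
            rw [pow_add, pow_add]; ring
        _ = (Fintype.card B:ℝ) ^ (H.neighborFinset w₀).card
            * ((Fintype.card B:ℝ) ^ (1 + (V2.card - (H.neighborFinset w₀).card))
            * ∑ f : A → B, Jw G V2 (f u) f
              * Real.log (Mw G (H.neighborFinset w₀) f)) := by rw [hK]
        _ = (Fintype.card B:ℝ) ^ (H.neighborFinset w₀).card
            * ∑ f : A → B, Mw G (H.neighborFinset w₀) f
              * Real.log (Mw G (H.neighborFinset w₀) f) := by rw [hPM]
    have hfinal : (Fintype.card B:ℝ) ^ (Fintype.card A)
          * (((H.neighborFinset w₀).card : ℝ) * ((∑ y, dR G y / eps G * Real.log (dR G y)) - Real.log (eps G)))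
        ≤ (Fintype.card B:ℝ) ^ (Fintype.card A)
          * ∑ f : A → B, (Jw G V2 (f u) f * ∏ w ∈ V1.erase u, kap G (H.neighborFinset w) w f) * Real.log (Mw G (H.neighborFinset w₀) f) := by
      rw [hchain]
      calc (Fintype.card B:ℝ) ^ (Fintype.card A)
            * (((H.neighborFinset w₀).card : ℝ) * ((∑ y, dR G y / eps G * Real.log (dR G y)) - Real.log (eps G)))
          = ((H.neighborFinset w₀).card : ℝ) * ((Fintype.card B:ℝ) ^ (Fintype.card A)
              * ((∑ y, dR G y / eps G * Real.log (dR G y)) - Real.log (eps G))) := by ring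
        _ = (Fintype.card B:ℝ) ^ (H.neighborFinset w₀).card
              * (∑ f : A → B, Mw G (H.neighborFinset w₀) f
                * Real.log (∏ b ∈ H.neighborFinset w₀, (dR G (f b) / eps G))) := by
            rw [hMlogR]
        _ ≤ (Fintype.card B:ℝ) ^ (H.neighborFinset w₀).card
              * ∑ f : A → B, Mw G (H.neighborFinset w₀) f
                * Real.log (Mw G (H.neighborFinset w₀) f) := by
            exact mul_le_mul_of_nonneg_left hgibbs (by positivity)
    exact le_of_mul_le_mul_left (by
      calc (Fintype.card B:ℝ) ^ (Fintype.card A)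
            * (((H.neighborFinset w₀).card : ℝ) * ((∑ y, dR G y / eps G * Real.log (dR G y)) - Real.log (eps G)))
          ≤ _ := hfinal) (by positivity)
  have hdel : Real.log (eps G) - (∑ y, dR G y / eps G * Real.log (dR G y)) ≤ Real.log (Fintype.card B : ℝ) := by
    have hg := sid_gibbs (univ : Finset B) (fun y => dR G y / eps G)
      (fun _ => 1 / (Fintype.card B : ℝ))
      (fun y _ => div_nonneg (dR_nonneg G y) (eps_nonneg G))
      (fun y _ => by positivity)
      (fun y _ _ => by positivity)
    rw [sum_dR_div G hepsne] at hg
    have hRs : ∑ _y : B, 1/(Fintype.card B:ℝ) = 1 := by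
      rw [Finset.sum_const, Finset.card_univ, nsmul_eq_mul]
      field_simp
    rw [hRs] at hg
    have hterm : ∀ y : B, dR G y / eps G
          * Real.log ((1/(Fintype.card B:ℝ)) / (dR G y / eps G))
        = dR G y / eps G * (Real.log (eps G) - Real.log (Fintype.card B:ℝ))
            - dR G y / eps G * Real.log (dR G y) := by
      intro y
      rcases eq_or_ne (dR G y) 0 with h | h
      · rw [h]; simp
      · have h1 : dR G y / eps G ≠ 0 := div_ne_zero h hepsne
        rw [Real.log_div (by positivity) h1, Real.log_div h hepsne,
          Real.log_div one_ne_zero hnB.ne', Real.log_one]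
        ring
    rw [Finset.sum_congr rfl (fun y _ => hterm y), Finset.sum_sub_distrib,
      ← Finset.sum_mul, sum_dR_div G hepsne, one_mul] at hg
    linarith
  have hprefadj : ∀ f : A → B, Jw G V2 (f u) f ≠ 0 → ∀ b' ∈ V2, G.Adj (f u) (f b') := by
    intro f hpref
    have hnum : (∏ b' ∈ V2, Ar G (f u) (f b')) ≠ 0 := fun h =>
      hpref (by unfold Jw; rw [h, zero_div])
    exact prod_Ar_ne_zero_iff.mp hnum
  have hkapadj : ∀ (f : A → B) (w : A), kap G (H.neighborFinset w) w f ≠ 0 →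
      ∀ b' ∈ H.neighborFinset w, G.Adj (f w) (f b') := by
    intro f w hk
    have hJ : Jw G (H.neighborFinset w) (f w) f ≠ 0 := fun h =>
      hk (by unfold kap; rw [h, zero_div])
    have hnum : (∏ b'' ∈ H.neighborFinset w, Ar G (f w) (f b'')) ≠ 0 := fun h =>
      hJ (by unfold Jw; rw [h, zero_div])
    exact prod_Ar_ne_zero_iff.mp hnum
  have hsupp : ∀ f : A → B, (Jw G V2 (f u) f * ∏ w ∈ V1.erase u, kap G (H.neighborFinset w) w f) ≠ 0 → ∀ a b, H.Adj a b → G.Adj (f a) (f b) := by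
    intro f hQne a b hab
    have hpref : Jw G V2 (f u) f ≠ 0 := (mul_ne_zero_iff.mp hQne).1
    have hkap : ∀ w ∈ V1.erase u, kap G (H.neighborFinset w) w f ≠ 0 :=
      Finset.prod_ne_zero_iff.mp (mul_ne_zero_iff.mp hQne).2
    have key : ∀ a' b', a' ∈ V1 → b' ∈ V2 → H.Adj a' b' → G.Adj (f a') (f b') := by
      intro a' b' ha' hb' hadj
      rcases eq_or_ne a' u with rfl | hne
      · exact hprefadj f hpref b' hb'
      · have ha'W : a' ∈ V1.erase u := Finset.mem_erase.mpr ⟨hne, ha'⟩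
        exact hkapadj f a' (hkap a' ha'W) b'
          (by rw [SimpleGraph.mem_neighborFinset]; exact hadj)
    rcases hbip a b hab with ⟨ha, hb⟩ | ⟨ha, hb⟩
    · exact key a b ha hb hab
    · exact (key b a hb ha hab.symm).symm
  have hNpos : 0 < homCount H G := by
    have hex : ∃ f : A → B, (Jw G V2 (f u) f * ∏ w ∈ V1.erase u, kap G (H.neighborFinset w) w f) ≠ 0 := by
      by_contra h
      push_neg at h
      rw [Finset.sum_eq_zero (fun f _ => h f)] at hQ1
      norm_num at hQ1
    obtain ⟨f, hf⟩ := hex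
    unfold homCount
    refine Finset.card_pos.mpr ⟨f, ?_⟩
    rw [Finset.mem_filter]
    exact ⟨Finset.mem_univ f, hsupp f hf⟩
  have hQnonneg : ∀ f : A → B, 0 ≤ Jw G V2 (f u) f * ∏ w ∈ V1.erase u, kap G (H.neighborFinset w) w f := by
    intro f
    exact mul_nonneg (Jw_nonneg G V2 (f u) f)
      (Finset.prod_nonneg (fun w _ => kap_nonneg G (H.neighborFinset w) w f))
  have hlogQ : ∀ f : A → B, (Jw G V2 (f u) f * ∏ w ∈ V1.erase u, kap G (H.neighborFinset w) w f) ≠ 0 →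
      -Real.log (Jw G V2 (f u) f * ∏ w ∈ V1.erase u, kap G (H.neighborFinset w) w f)
      = Real.log (eps G) + ((V2.card - 1 : ℕ) : ℝ) * Real.log (dR G (f u))
        + ∑ w ∈ V1.erase u, (Real.log (Mw G (H.neighborFinset w) f) + Real.log (eps G)
            + (((H.neighborFinset w).card - 1 : ℕ) : ℝ) * Real.log (dR G (f w))) := by
    intro f hQne
    have hpref : Jw G V2 (f u) f ≠ 0 := (mul_ne_zero_iff.mp hQne).1
    have hprodne : (∏ w ∈ V1.erase u, kap G (H.neighborFinset w) w f) ≠ 0 :=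
      (mul_ne_zero_iff.mp hQne).2
    have hkap : ∀ w ∈ V1.erase u, kap G (H.neighborFinset w) w f ≠ 0 :=
      Finset.prod_ne_zero_iff.mp hprodne
    have hadjV2 := hprefadj f hpref
    have hdfu : 0 < dR G (f u) := by
      obtain ⟨b₁, hb₁⟩ := hV2ne
      exact dR_pos_of_adj (hadjV2 b₁ hb₁)
    have hprefval : Jw G V2 (f u) f = (eps G * dR G (f u) ^ (V2.card - 1))⁻¹ := by
      unfold Jw
      rw [prod_Ar_eq_one hadjV2, one_div]
    have hlogpref : Real.log (Jw G V2 (f u) f)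
        = -(Real.log (eps G) + ((V2.card - 1 : ℕ):ℝ) * Real.log (dR G (f u))) := by
      rw [hprefval, Real.log_inv, Real.log_mul hepsne (pow_ne_zero _ hdfu.ne'),
        Real.log_pow]
    have hlogkap : ∀ w ∈ V1.erase u, Real.log (kap G (H.neighborFinset w) w f)
        = -(Real.log (Mw G (H.neighborFinset w) f) + Real.log (eps G)
            + (((H.neighborFinset w).card - 1 : ℕ):ℝ) * Real.log (dR G (f w))) := by
      intro w hw
      have hk := hkap w hw
      have hadjw := hkapadj f w hk
      have hMne : Mw G (H.neighborFinset w) f ≠ 0 := fun h =>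
        hk (by unfold kap; rw [h, div_zero])
      have hpowne : dR G (f w) ^ ((H.neighborFinset w).card - 1) ≠ 0 := by
        rcases Nat.eq_zero_or_pos (H.neighborFinset w).card with h0 | hpos
        · rw [h0]
          norm_num
        · obtain ⟨b₁, hb₁⟩ := Finset.card_pos.mp hpos
          exact pow_ne_zero _ (dR_pos_of_adj (hadjw b₁ hb₁)).ne'
      have hJval : Jw G (H.neighborFinset w) (f w) f
          = (eps G * dR G (f w) ^ ((H.neighborFinset w).card - 1))⁻¹ := by
        unfold Jw
        rw [prod_Ar_eq_one hadjw, one_div]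
      unfold kap
      rw [Real.log_div (by
            rw [hJval]
            exact inv_ne_zero (mul_ne_zero hepsne hpowne)) hMne,
        hJval, Real.log_inv, Real.log_mul hepsne hpowne, Real.log_pow]
      ring
    rw [Real.log_mul hpref hprodne,
      Real.log_prod (fun w hw => Finset.prod_ne_zero_iff.mp hprodne w hw),
      hlogpref, Finset.sum_congr rfl hlogkap, Finset.sum_neg_distrib]
    ring
  have hNne : ((homCount H G : ℝ)) ≠ 0 := by
    have : (0:ℝ) < (homCount H G : ℝ) := by exact_mod_cast hNpos
    exact this.ne'
  have hEnt : ∑ f : A → B, (Jw G V2 (f u) f * ∏ w ∈ V1.erase u, kap G (H.neighborFinset w) w f) * (-Real.log (Jw G V2 (f u) f * ∏ w ∈ V1.erase u, kap G (H.neighborFinset w) w f))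
      ≤ Real.log (homCount H G : ℝ) := by
    have hgibbs := sid_gibbs (univ : Finset (A → B))
      (fun f => Jw G V2 (f u) f * ∏ w ∈ V1.erase u, kap G (H.neighborFinset w) w f)
      (fun f => if (∀ a b, H.Adj a b → G.Adj (f a) (f b))
        then ((homCount H G : ℝ))⁻¹ else 0)
      (fun f _ => hQnonneg f)
      (fun f _ => by
        by_cases hc : ∀ a b, H.Adj a b → G.Adj (f a) (f b)
        · simp only [if_pos hc]
          positivity
        · simp only [if_neg hc]
          exact le_refl 0)
      (fun f _ hq => by
        have hc := hsupp f hq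
        simp only [if_pos hc]
        exact inv_ne_zero hNne)
    have hRsum : (∑ f : A → B, if (∀ a b, H.Adj a b → G.Adj (f a) (f b))
        then ((homCount H G : ℝ))⁻¹ else 0) = 1 := by
      rw [← Finset.sum_filter, Finset.sum_const, nsmul_eq_mul]
      have hcard : (Finset.univ.filter
          (fun f : A → B => ∀ a b, H.Adj a b → G.Adj (f a) (f b))).card
          = homCount H G := rfl
      rw [hcard]
      field_simp
    rw [hRsum, hQ1, sub_self] at hgibbs
    have hterm : ∀ f : A → B, (Jw G V2 (f u) f * ∏ w ∈ V1.erase u, kap G (H.neighborFinset w) w f)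
          * Real.log ((if (∀ a b, H.Adj a b → G.Adj (f a) (f b))
              then ((homCount H G : ℝ))⁻¹ else 0) / (Jw G V2 (f u) f * ∏ w ∈ V1.erase u, kap G (H.neighborFinset w) w f))
        = (Jw G V2 (f u) f * ∏ w ∈ V1.erase u, kap G (H.neighborFinset w) w f) * (-Real.log (homCount H G : ℝ)) + (Jw G V2 (f u) f * ∏ w ∈ V1.erase u, kap G (H.neighborFinset w) w f) * (-Real.log (Jw G V2 (f u) f * ∏ w ∈ V1.erase u, kap G (H.neighborFinset w) w f)) := by
      intro f
      rcases eq_or_ne (Jw G V2 (f u) f * ∏ w ∈ V1.erase u, kap G (H.neighborFinset w) w f) 0 with hq | hq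
      · rw [hq]; ring
      · rw [if_pos (hsupp f hq), Real.log_div (inv_ne_zero hNne) hq, Real.log_inv]
        ring
    rw [Finset.sum_congr rfl (fun f _ => hterm f), Finset.sum_add_distrib,
      ← Finset.sum_mul, hQ1, one_mul] at hgibbs
    linarith
  have hsplit : ∑ f : A → B, (Jw G V2 (f u) f * ∏ w ∈ V1.erase u, kap G (H.neighborFinset w) w f) * (-Real.log (Jw G V2 (f u) f * ∏ w ∈ V1.erase u, kap G (H.neighborFinset w) w f))
      = Real.log (eps G) + ((V2.card - 1 : ℕ):ℝ) * (∑ y, dR G y / eps G * Real.log (dR G y))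
        + ∑ w ∈ V1.erase u,
            ((∑ f : A → B, (Jw G V2 (f u) f * ∏ w ∈ V1.erase u, kap G (H.neighborFinset w) w f) * Real.log (Mw G (H.neighborFinset w) f))
              + Real.log (eps G)
              + (((H.neighborFinset w).card - 1 : ℕ):ℝ)
                * (∑ f : A → B, (Jw G V2 (f u) f * ∏ w ∈ V1.erase u, kap G (H.neighborFinset w) w f) * Real.log (dR G (f w)))) := by
    have h1 : ∀ f : A → B, (Jw G V2 (f u) f * ∏ w ∈ V1.erase u, kap G (H.neighborFinset w) w f) * (-Real.log (Jw G V2 (f u) f * ∏ w ∈ V1.erase u, kap G (H.neighborFinset w) w f))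
        = (Jw G V2 (f u) f * ∏ w ∈ V1.erase u, kap G (H.neighborFinset w) w f) * Real.log (eps G)
          + ((V2.card - 1 : ℕ):ℝ) * ((Jw G V2 (f u) f * ∏ w ∈ V1.erase u, kap G (H.neighborFinset w) w f) * Real.log (dR G (f u)))
          + ∑ w ∈ V1.erase u,
              ((Jw G V2 (f u) f * ∏ w ∈ V1.erase u, kap G (H.neighborFinset w) w f) * Real.log (Mw G (H.neighborFinset w) f)
                + (Jw G V2 (f u) f * ∏ w ∈ V1.erase u, kap G (H.neighborFinset w) w f) * Real.log (eps G)
                + (((H.neighborFinset w).card - 1 : ℕ):ℝ)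
                  * ((Jw G V2 (f u) f * ∏ w ∈ V1.erase u, kap G (H.neighborFinset w) w f) * Real.log (dR G (f w)))) := by
      intro f
      rcases eq_or_ne (Jw G V2 (f u) f * ∏ w ∈ V1.erase u, kap G (H.neighborFinset w) w f) 0 with hq | hq
      · rw [hq]
        simp
      · rw [hlogQ f hq]
        have hsum2 : (∑ w ∈ V1.erase u,
              ((Jw G V2 (f u) f * ∏ w ∈ V1.erase u, kap G (H.neighborFinset w) w f) * Real.log (Mw G (H.neighborFinset w) f)
                + (Jw G V2 (f u) f * ∏ w ∈ V1.erase u, kap G (H.neighborFinset w) w f) * Real.log (eps G)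
                + (((H.neighborFinset w).card - 1 : ℕ):ℝ)
                  * ((Jw G V2 (f u) f * ∏ w ∈ V1.erase u, kap G (H.neighborFinset w) w f) * Real.log (dR G (f w)))))
            = ∑ w ∈ V1.erase u, (Jw G V2 (f u) f * ∏ w ∈ V1.erase u, kap G (H.neighborFinset w) w f)
                * (Real.log (Mw G (H.neighborFinset w) f) + Real.log (eps G)
                  + (((H.neighborFinset w).card - 1 : ℕ):ℝ) * Real.log (dR G (f w))) :=
          Finset.sum_congr rfl (fun w _ => by ring)
        rw [hsum2, ← Finset.mul_sum]
        ring
    rw [Finset.sum_congr rfl (fun f _ => h1 f), Finset.sum_add_distrib,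
      Finset.sum_add_distrib, ← Finset.sum_mul, hQ1, one_mul, ← Finset.mul_sum, hQu,
      Finset.sum_comm]
    congr 1
    refine Finset.sum_congr rfl (fun w hw => ?_)
    rw [Finset.sum_add_distrib, Finset.sum_add_distrib, ← Finset.sum_mul, hQ1, one_mul,
      ← Finset.mul_sum]
  have hwbound : ∀ w ∈ V1.erase u,
      Real.log (Fintype.card B:ℝ)
        + ((H.neighborFinset w).card : ℝ)
          * (Real.log (eps G) - 2 * Real.log (Fintype.card B:ℝ))
      ≤ (∑ f : A → B, (Jw G V2 (f u) f * ∏ w ∈ V1.erase u, kap G (H.neighborFinset w) w f) * Real.log (Mw G (H.neighborFinset w) f))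
          + Real.log (eps G)
          + (((H.neighborFinset w).card - 1 : ℕ):ℝ)
            * (∑ f : A → B, (Jw G V2 (f u) f * ∏ w ∈ V1.erase u, kap G (H.neighborFinset w) w f) * Real.log (dR G (f w))) := by
    intro w hw
    rcases Nat.eq_zero_or_pos (H.neighborFinset w).card with h0 | hpos
    · rw [hQM0 w hw h0, h0]
      norm_num
    · have hd1 : 1 ≤ (H.neighborFinset w).card := hpos
      have h1 := hQM w hw hd1
      have h2 := hQw w hw hd1
      rw [h2]
      have hc : (((H.neighborFinset w).card - 1 : ℕ):ℝ)
          = ((H.neighborFinset w).card:ℝ) - 1 := by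
        rw [Nat.cast_sub hd1, Nat.cast_one]
      rw [hc]
      have hdc1 : (1:ℝ) ≤ ((H.neighborFinset w).card:ℝ) := by exact_mod_cast hd1
      have hδ : (0:ℝ) ≤ (∑ y, dR G y / eps G * Real.log (dR G y)) - Real.log (eps G) + Real.log (Fintype.card B:ℝ) := by
        linarith [hdel]
      nlinarith [h1, mul_nonneg (by linarith : (0:ℝ) ≤ 2*((H.neighborFinset w).card:ℝ) - 1) hδ]
  have hmain : (Fintype.card A : ℝ) * Real.log (Fintype.card B : ℝ)
      + (m:ℝ) * (Real.log (eps G) - 2 * Real.log (Fintype.card B : ℝ))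
      ≤ Real.log (homCount H G : ℝ) := by
    have ht1 : 1 ≤ V2.card := hV2ne.card_pos
    have hcastt : ((V2.card - 1 : ℕ):ℝ) = (V2.card:ℝ) - 1 := by
      rw [Nat.cast_sub ht1, Nat.cast_one]
    have hEnt' := hEnt
    rw [hsplit, hcastt] at hEnt'
    have hsumge : ∑ w ∈ V1.erase u,
        (Real.log (Fintype.card B:ℝ)
          + ((H.neighborFinset w).card : ℝ)
            * (Real.log (eps G) - 2 * Real.log (Fintype.card B:ℝ)))
        ≤ ∑ w ∈ V1.erase u,
            ((∑ f : A → B, (Jw G V2 (f u) f * ∏ w ∈ V1.erase u, kap G (H.neighborFinset w) w f) * Real.log (Mw G (H.neighborFinset w) f))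
              + Real.log (eps G)
              + (((H.neighborFinset w).card - 1 : ℕ):ℝ)
                * (∑ f : A → B, (Jw G V2 (f u) f * ∏ w ∈ V1.erase u, kap G (H.neighborFinset w) w f) * Real.log (dR G (f w)))) :=
      Finset.sum_le_sum hwbound
    have hτ : ∑ w ∈ V1.erase u,
        (Real.log (Fintype.card B:ℝ)
          + ((H.neighborFinset w).card : ℝ)
            * (Real.log (eps G) - 2 * Real.log (Fintype.card B:ℝ)))
        = ((V1.erase u).card : ℝ) * Real.log (Fintype.card B:ℝ)
          + ((∑ w ∈ V1.erase u, (H.neighborFinset w).card : ℕ) : ℝ)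
            * (Real.log (eps G) - 2 * Real.log (Fintype.card B:ℝ)) := by
      rw [Finset.sum_add_distrib, Finset.sum_const, nsmul_eq_mul, ← Finset.sum_mul]
      congr 2
      rw [Nat.cast_sum]
    rw [hτ] at hsumge
    have hmcast : (m:ℝ) = (V2.card:ℝ)
        + ((∑ w ∈ V1.erase u, (H.neighborFinset w).card : ℕ) : ℝ) := by
      rw [hmt]; push_cast; ring
    have hNAcast : ((Fintype.card A):ℝ) = 1 + (V2.card:ℝ) + ((V1.erase u).card:ℝ) := by
      rw [hNA]; push_cast; ring
    have hLlow : Real.log (eps G) - Real.log (Fintype.card B:ℝ) ≤ (∑ y, dR G y / eps G * Real.log (dR G y)) := by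
      linarith [hdel]
    have htL : ((V2.card:ℝ) - 1) * (Real.log (eps G) - Real.log (Fintype.card B:ℝ))
        ≤ ((V2.card:ℝ) - 1) * (∑ y, dR G y / eps G * Real.log (dR G y)) := by
      apply mul_le_mul_of_nonneg_left hLlow
      have : (1:ℝ) ≤ (V2.card:ℝ) := by exact_mod_cast ht1
      linarith
    rw [hmcast, hNAcast]
    linarith [hEnt', hsumge, htL]
  -- convert to the stated inequality
  have hNposR : (0:ℝ) < (homCount H G : ℝ) := by exact_mod_cast hNpos
  have hXpos : (0:ℝ) < (eps G / (Fintype.card B:ℝ)^2)^m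
      * (Fintype.card B:ℝ)^(Fintype.card A) := by positivity
  have hlogX : Real.log ((eps G / (Fintype.card B:ℝ)^2)^m
        * (Fintype.card B:ℝ)^(Fintype.card A))
      = (Fintype.card A : ℝ) * Real.log (Fintype.card B : ℝ)
        + (m:ℝ) * (Real.log (eps G) - 2 * Real.log (Fintype.card B : ℝ)) := by
    rw [Real.log_mul (by positivity) (by positivity), Real.log_pow, Real.log_pow,
      Real.log_div hepsne (by positivity), Real.log_pow]
    push_cast
    ring
  have hle2 : (eps G / (Fintype.card B:ℝ)^2)^m * (Fintype.card B:ℝ)^(Fintype.card A)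
      ≤ (homCount H G : ℝ) := by
    have := (Real.log_le_log_iff hXpos hNposR).mp (by rw [hlogX]; exact hmain)
    exact this
  have hgoal : (eps G / (Fintype.card B:ℝ)^2)^m
      ≤ (homCount H G : ℝ) / (Fintype.card B:ℝ)^(Fintype.card A) := by
    rw [le_div_iff₀ (by positivity)]
    exact hle2
  rw [eps_eq G] at hgoal
  exact hgoal
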